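/- Consider V = ℂ², H = ℝ acting by t·(z,w) = (e^{it}z, e^{i√2·t}w), and L(t) = |t|. Then inf_{t ≠ 0} |t| / sqrt(2‖id − a_t‖) = 0 (where a_t is the unitary operator of the action and ‖·‖ the operator norm), while there exists r > 0 (any r ≤ 1/√2) such that ‖u − a_t u‖ ≤ |t| for all u with ‖u‖ < r and all t ∈ ℝ. -/

import Mathlib

open Complex

lemma norm_one_sub_exp_sq (s : ℝ) : ‖(1 : ℂ) - Complex.exp (Complex.I * s)‖ ^ 2 = 2 - 2 * Real.cos s := by
  rw [mul_comm, Complex.exp_mul_I, Complex.sq_norm]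
  simp [Complex.normSq_apply, Complex.cos_ofReal_re, Complex.sin_ofReal_re]
  nlinarith [Real.sin_sq_add_cos_sq s]

lemma norm_one_sub_exp_le (s : ℝ) : ‖(1 : ℂ) - Complex.exp (Complex.I * s)‖ ≤ |s| := by
  have h := norm_one_sub_exp_sq s
  have hc := Real.one_sub_sq_div_two_le_cos (x := s)
  have hsq : ‖(1 : ℂ) - Complex.exp (Complex.I * s)‖ ^ 2 ≤ |s| ^ 2 := by
    rw [h, _root_.sq_abs]; nlinarith
  exact (pow_le_pow_iff_left₀ (norm_nonneg _) (abs_nonneg s) two_ne_zero).mp hsq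

/-- The action of `t ∈ ℝ` on `ℂ²` by `t·(z,w) = (e^{it} z, e^{i√2 t} w)`. -/
noncomputable def aT (t : ℝ) :
    EuclideanSpace ℂ (Fin 2) →ₗ[ℂ] EuclideanSpace ℂ (Fin 2) where
  toFun u := WithLp.toLp 2 (fun i =>
    Complex.exp (Complex.I * (if i = 0 then (t : ℂ) else ((Real.sqrt 2 * t : ℝ) : ℂ))) * u i)
  map_add' u v := by
    ext i
    simp [mul_add]
  map_smul' c u := by
    ext i
    simp
    ring

lemma sub_aT_apply (t : ℝ) (u : EuclideanSpace ℂ (Fin 2)) (i : Fin 2) :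
    (u - aT t u) i =
      (1 - Complex.exp (Complex.I * (if i = 0 then (t : ℂ) else ((Real.sqrt 2 * t : ℝ) : ℂ)))) * u i := by
  simp [aT, sub_mul]

lemma norm_sub_aT_sq (t : ℝ) (u : EuclideanSpace ℂ (Fin 2)) :
    ‖u - aT t u‖ ^ 2 =
      ‖(1 : ℂ) - Complex.exp (Complex.I * (t : ℂ))‖ ^ 2 * ‖u 0‖ ^ 2 +
      ‖(1 : ℂ) - Complex.exp (Complex.I * ((Real.sqrt 2 * t : ℝ) : ℂ))‖ ^ 2 * ‖u 1‖ ^ 2 := by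
  rw [EuclideanSpace.norm_eq, Real.sq_sqrt (by positivity)]
  rw [Fin.sum_univ_two, sub_aT_apply, sub_aT_apply]
  simp [norm_mul, mul_pow]

lemma norm_sq_eq (u : EuclideanSpace ℂ (Fin 2)) : ‖u‖ ^ 2 = ‖u 0‖ ^ 2 + ‖u 1‖ ^ 2 := by
  rw [EuclideanSpace.norm_eq, Real.sq_sqrt (by positivity), Fin.sum_univ_two]

set_option maxHeartbeats 800000 in
lemma part1 :
    (⨅ t : {s : ℝ // s ≠ 0},
        |t.1| / Real.sqrt (2 * ‖ContinuousLinearMap.id ℂ (EuclideanSpace ℂ (Fin 2)) -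
          LinearMap.toContinuousLinearMap (aT t.1)‖)) = 0 := by
  set f : {s : ℝ // s ≠ 0} → ℝ := fun t =>
    |t.1| / Real.sqrt (2 * ‖ContinuousLinearMap.id ℂ (EuclideanSpace ℂ (Fin 2)) -
        LinearMap.toContinuousLinearMap (aT t.1)‖) with hf
  have hnn : ∀ x, 0 ≤ f x := fun x => div_nonneg (abs_nonneg _) (Real.sqrt_nonneg _)
  have hb : BddBelow (Set.range f) := ⟨0, by rintro _ ⟨x, rfl⟩; exact hnn x⟩
  haveI : Nonempty {s : ℝ // s ≠ 0} := ⟨⟨1, one_ne_zero⟩⟩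
  refine le_antisymm ?_ (le_ciInf hnn)
  by_contra hlt
  push_neg at hlt
  set ε := ⨅ t, f t with hε
  -- choose t
  set t : ℝ := min 1 (ε ^ 2 / 2) with ht
  have htpos : 0 < t := lt_min one_pos (by positivity)
  have ht1 : t ≤ 1 := min_le_left _ _
  have hte : t ≤ ε ^ 2 / 2 := min_le_right _ _
  -- lower bound on operator norm
  set T := ContinuousLinearMap.id ℂ (EuclideanSpace ℂ (Fin 2)) -
        LinearMap.toContinuousLinearMap (aT t) with hT
  set e0 : EuclideanSpace ℂ (Fin 2) := EuclideanSpace.single 0 1 with he0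
  have he0n : ‖e0‖ = 1 := by simp [he0, EuclideanSpace.norm_single]
  have hTe0 : ‖T e0‖ = ‖(1 : ℂ) - Complex.exp (Complex.I * (t : ℂ))‖ := by
    have h1 : T e0 = e0 - aT t e0 := by
      simp [hT, ContinuousLinearMap.sub_apply]
    have h2 : ‖e0 - aT t e0‖ ^ 2 = ‖(1 : ℂ) - Complex.exp (Complex.I * (t : ℂ))‖ ^ 2 := by
      rw [norm_sub_aT_sq]
      simp [he0, EuclideanSpace.single_apply]
    rw [h1]
    have := congrArg Real.sqrt h2
    rwa [Real.sqrt_sq (norm_nonneg _), Real.sqrt_sq (norm_nonneg _)] at this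
  have hN1 : ‖(1 : ℂ) - Complex.exp (Complex.I * (t : ℂ))‖ ≤ ‖T‖ := by
    calc ‖(1 : ℂ) - Complex.exp (Complex.I * (t : ℂ))‖ = ‖T e0‖ := hTe0.symm
      _ ≤ ‖T‖ * ‖e0‖ := T.le_opNorm e0
      _ = ‖T‖ := by rw [he0n, mul_one]
  -- ‖1 - e^{it}‖ ≥ t/2
  have hcos : Real.cos t ≤ 1 - 2 / Real.pi ^ 2 * t ^ 2 :=
    Real.cos_le_one_sub_mul_cos_sq (by
      rw [abs_of_pos htpos]
      linarith [Real.two_le_pi, ht1])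
  have hsq := norm_one_sub_exp_sq t
  have hpi : Real.pi ^ 2 ≤ 16 := by nlinarith [Real.pi_le_four, Real.pi_pos]
  have hlow : t / 2 ≤ ‖(1 : ℂ) - Complex.exp (Complex.I * (t : ℂ))‖ := by
    have h2 : (t / 2) ^ 2 ≤ ‖(1 : ℂ) - Complex.exp (Complex.I * (t : ℂ))‖ ^ 2 := by
      rw [hsq]
      have hp2 : (0:ℝ) < Real.pi ^ 2 := by positivity
      have heq : 4 / Real.pi ^ 2 * t ^ 2 = 2 * (2 / Real.pi ^ 2 * t ^ 2) := by ring
      have : 4 / Real.pi ^ 2 * t ^ 2 ≤ 2 - 2 * Real.cos t := by rw [heq]; linarith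
      have h4 : t ^ 2 / 4 ≤ 4 / Real.pi ^ 2 * t ^ 2 := by
        rw [div_mul_eq_mul_div, div_le_div_iff₀ (by norm_num) hp2]
        nlinarith [sq_nonneg t]
      nlinarith
    have := Real.sqrt_le_sqrt h2
    rwa [Real.sqrt_sq (by positivity), Real.sqrt_sq (norm_nonneg _)] at this
  -- conclude f ⟨t,_⟩ < ε
  have hNpos : 0 < ‖T‖ := lt_of_lt_of_le (by linarith) hN1
  have hval : f ⟨t, htpos.ne'⟩ ≤ Real.sqrt t := by
    have hst : Real.sqrt t ≤ Real.sqrt (2 * ‖T‖) := by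
      apply Real.sqrt_le_sqrt
      have : t / 2 ≤ ‖T‖ := le_trans hlow hN1
      linarith
    have hstpos : 0 < Real.sqrt t := Real.sqrt_pos.mpr htpos
    calc f ⟨t, htpos.ne'⟩ = t / Real.sqrt (2 * ‖T‖) := by
          rw [hf]; simp [abs_of_pos htpos, hT]
      _ ≤ t / Real.sqrt t := by
          apply div_le_div_of_nonneg_left htpos.le hstpos hst
      _ = Real.sqrt t := Real.div_sqrt
  have hst2 : Real.sqrt t < ε := by
    have : Real.sqrt t ≤ Real.sqrt (ε ^ 2 / 2) := Real.sqrt_le_sqrt hte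
    have h2 : Real.sqrt (ε ^ 2 / 2) < Real.sqrt (ε ^ 2) :=
      Real.sqrt_lt_sqrt (by positivity) (by nlinarith)
    rw [Real.sqrt_sq hlt.le] at h2
    linarith
  have : ε ≤ f ⟨t, htpos.ne'⟩ := ciInf_le hb _
  linarith

set_option maxHeartbeats 800000 in
lemma part2 : ∃ r > 0, ∀ u : EuclideanSpace ℂ (Fin 2), ‖u‖ < r →
    ∀ t : ℝ, ‖u - aT t u‖ ≤ |t| := by
  refine ⟨(Real.sqrt 2)⁻¹, by positivity, fun u hu t => ?_⟩
  have hu2 : ‖u‖ ^ 2 ≤ 2⁻¹ := by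
    have h2 : ‖u‖ ^ 2 ≤ ((Real.sqrt 2)⁻¹) ^ 2 :=
      pow_le_pow_left₀ (norm_nonneg _) hu.le 2
    rwa [inv_pow, Real.sq_sqrt (by norm_num)] at h2
  have h0 : ‖(1 : ℂ) - Complex.exp (Complex.I * (t : ℂ))‖ ≤ |t| := norm_one_sub_exp_le t
  have h1 : ‖(1 : ℂ) - Complex.exp (Complex.I * ((Real.sqrt 2 * t : ℝ) : ℂ))‖ ≤ Real.sqrt 2 * |t| := by
    have := norm_one_sub_exp_le (Real.sqrt 2 * t)
    rwa [abs_mul, _root_.abs_of_nonneg (Real.sqrt_nonneg 2)] at this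
  have hsq : ‖u - aT t u‖ ^ 2 ≤ |t| ^ 2 := by
    rw [norm_sub_aT_sq]
    have hns := norm_sq_eq u
    have h0' : ‖(1 : ℂ) - Complex.exp (Complex.I * (t : ℂ))‖ ^ 2 ≤ |t| ^ 2 :=
      pow_le_pow_left₀ (norm_nonneg _) h0 2
    have h1' : ‖(1 : ℂ) - Complex.exp (Complex.I * ((Real.sqrt 2 * t : ℝ) : ℂ))‖ ^ 2 ≤ 2 * |t| ^ 2 := by
      have := pow_le_pow_left₀ (norm_nonneg _) h1 2
      rwa [mul_pow, Real.sq_sqrt (by norm_num)] at this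
    have hxy : ‖u 0‖ ^ 2 + ‖u 1‖ ^ 2 ≤ 2⁻¹ := by rw [← hns]; exact hu2
    nlinarith [mul_le_mul_of_nonneg_right h0' (sq_nonneg ‖u 0‖),
      mul_le_mul_of_nonneg_right h1' (sq_nonneg ‖u 1‖),
      mul_le_mul_of_nonneg_left hxy (sq_nonneg |t|),
      mul_nonneg (sq_nonneg |t|) (sq_nonneg ‖u 0‖),
      mul_nonneg (sq_nonneg |t|) (sq_nonneg ‖u 1‖)]
  exact (pow_le_pow_iff_left₀ (norm_nonneg _) (abs_nonneg t) two_ne_zero).mp hsq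

/-- for the action `t·(z,w)=(e^{it}z, e^{i√2 t}w)` on `ℂ²` with
`L(t)=|t|`, the holonomy radius at the origin `inf_{t≠0} |t|/sqrt(2‖id − a_t‖)`
is `0`, while the convexity radius is positive: there is `r > 0` with
`‖u − a_t u‖ ≤ |t|` whenever `‖u‖ < r` and `t ∈ ℝ`. -/
theorem example_holRad_zero_cvxRad_pos :
    (⨅ t : {s : ℝ // s ≠ 0},
        |t.1| / Real.sqrt (2 * ‖ContinuousLinearMap.id ℂ (EuclideanSpace ℂ (Fin 2)) -
          LinearMap.toContinuousLinearMap (aT t.1)‖)) = 0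
    ∧ ∃ r > 0, ∀ u : EuclideanSpace ℂ (Fin 2), ‖u‖ < r →
        ∀ t : ℝ, ‖u - aT t u‖ ≤ |t| :=
  ⟨part1, part2⟩
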